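/- Let V be a Hilbert space, V_1,...,V_M subspaces, and P_i : V → V_i linear maps with sum_i P_i(φ) = φ for all φ ∈ V. Let ~V ⊂ V be a subspace and for each i let Π_i be the orthogonal projection onto ~V ∩ V_i, and define local stability constants c_i := sup_{φ≠0} ||(1 - Π_i) P_i(φ)|| / ||φ||. Then for any continuous linear functional F on V vanishing on ~V, it holds that ||F||_{V'} ≤ sum_i c_i ||F||_{V_i'}. -/

import Mathlib

open scoped RealInnerProductSpace

set_option synthInstance.maxHeartbeats 400000 in
/-- localization of the dual norm with local stability constants. -/
theorem dual_norm_localization_local_constants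
    {V : Type*} [NormedAddCommGroup V] [InnerProductSpace ℝ V] [CompleteSpace V]
    {M : ℕ} (Vs : Fin M → Submodule ℝ V)
    (P : Fin M → V →ₗ[ℝ] V)
    (hPmem : ∀ i φ, P i φ ∈ Vs i)
    (hPsum : ∀ φ : V, ∑ i, P i φ = φ)
    (tV : Submodule ℝ V) [∀ i, (tV ⊓ Vs i).HasOrthogonalProjection]
    (c : Fin M → ℝ)
    (hc : ∀ i (φ : V),
      ‖P i φ - ((tV ⊓ Vs i).orthogonalProjectionOnto (P i φ) : V)‖ ≤ c i * ‖φ‖)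
    (F : V →L[ℝ] ℝ) (hF : ∀ φ ∈ tV, F φ = 0) :
    ‖F‖ ≤ ∑ i, c i * ‖F.comp (Vs i).subtypeL‖ := by
  by_cases hV : ∀ φ : V, φ = 0
  · have hF0 : F = 0 := by ext φ; rw [hV φ]; simp
    subst hF0
    simp [ContinuousLinearMap.opNorm_zero]
  · push_neg at hV
    obtain ⟨φ₀, hφ₀⟩ := hV
    have hφ₀pos : 0 < ‖φ₀‖ := norm_pos_iff.mpr hφ₀
    have hcnn : ∀ i, 0 ≤ c i := by
      intro i
      have h1 := hc i φ₀
      nlinarith [norm_nonneg (P i φ₀ - ((tV ⊓ Vs i).orthogonalProjectionOnto (P i φ₀) : V))]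
    apply ContinuousLinearMap.opNorm_le_bound
    · exact Finset.sum_nonneg fun i _ => mul_nonneg (hcnn i) (ContinuousLinearMap.opNorm_nonneg (F.comp (Vs i).subtypeL))
    intro φ
    have key : F φ = ∑ i, F (P i φ - ((tV ⊓ Vs i).orthogonalProjectionOnto (P i φ) : V)) := by
      conv_lhs => rw [← hPsum φ]
      rw [map_sum]
      refine Finset.sum_congr rfl fun i _ => ?_
      have hz : F (((tV ⊓ Vs i).orthogonalProjectionOnto (P i φ) : V)) = 0 :=
        hF _ ((tV ⊓ Vs i).orthogonalProjectionOnto (P i φ)).2.1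
      rw [map_sub, hz, sub_zero]
    rw [key]
    calc ‖∑ i, F (P i φ - ((tV ⊓ Vs i).orthogonalProjectionOnto (P i φ) : V))‖
        ≤ ∑ i, ‖F (P i φ - ((tV ⊓ Vs i).orthogonalProjectionOnto (P i φ) : V))‖ :=
          norm_sum_le _ _
      _ ≤ ∑ i, c i * ‖F.comp (Vs i).subtypeL‖ * ‖φ‖ := by
          refine Finset.sum_le_sum fun i _ => ?_
          set x := P i φ - ((tV ⊓ Vs i).orthogonalProjectionOnto (P i φ) : V) with hx
          have hxmem : x ∈ Vs i :=
            sub_mem (hPmem i φ) ((tV ⊓ Vs i).orthogonalProjectionOnto (P i φ)).2.2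
          have h1 : F x = F.comp (Vs i).subtypeL ⟨x, hxmem⟩ := rfl
          rw [h1]
          calc ‖F.comp (Vs i).subtypeL ⟨x, hxmem⟩‖
              ≤ ‖F.comp (Vs i).subtypeL‖ * ‖(⟨x, hxmem⟩ : Vs i)‖ :=
                ContinuousLinearMap.le_opNorm _ _
            _ = ‖F.comp (Vs i).subtypeL‖ * ‖x‖ := rfl
            _ ≤ ‖F.comp (Vs i).subtypeL‖ * (c i * ‖φ‖) := by
                exact mul_le_mul_of_nonneg_left (hc i φ) (ContinuousLinearMap.opNorm_nonneg _)
            _ = c i * ‖F.comp (Vs i).subtypeL‖ * ‖φ‖ := by ring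
      _ = (∑ i, c i * ‖F.comp (Vs i).subtypeL‖) * ‖φ‖ := (Finset.sum_mul _ _ _).symm
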